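/- Let λ₁,…,λ_d > 0 and ρ > 0, and let γ* > 0 satisfy (ρ² - ½Σᵢλᵢ)γ* - d + ½Σᵢ√(λᵢ²γ*² + 4λᵢγ*) = 0. Then ρ·γ* ≤ √(Σᵢ λᵢ⁻¹). -/

import Mathlib

open Finset

lemma aux_sqrt (x : ℝ) (hx : 0 < x) : x + 2 - 2 / x ≤ Real.sqrt (x ^ 2 + 4 * x) := by
  rcases le_or_gt (x + 2 - 2 / x) 0 with h | h
  · exact h.trans (Real.sqrt_nonneg _)
  · rw [Real.le_sqrt h.le]
    have hxx : (2 / x) * x = 2 := by field_simp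
    · nlinarith [sq_nonneg (2 * x - 1), hxx, mul_pos hx hx, sq_nonneg x]
    · nlinarith

theorem rho_gamma_bound {d : ℕ} (l : Fin d → ℝ) (hl : ∀ i, 0 < l i)
    (ρ γ : ℝ) (hρ : 0 < ρ) (hγ : 0 < γ)
    (heq : (ρ ^ 2 - (1 / 2) * ∑ i, l i) * γ - d
        + (1 / 2) * ∑ i, Real.sqrt ((l i) ^ 2 * γ ^ 2 + 4 * l i * γ) = 0) :
    ρ * γ ≤ Real.sqrt (∑ i, (l i)⁻¹) := by
  have key : ∀ i : Fin d, l i * γ + 2 - (2 / γ) * (l i)⁻¹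
      ≤ Real.sqrt ((l i) ^ 2 * γ ^ 2 + 4 * l i * γ) := by
    intro i
    have h := aux_sqrt (l i * γ) (mul_pos (hl i) hγ)
    have h1 : (l i * γ) ^ 2 + 4 * (l i * γ) = (l i) ^ 2 * γ ^ 2 + 4 * l i * γ := by ring
    have h2 : 2 / (l i * γ) = (2 / γ) * (l i)⁻¹ := by
      field_simp
    rw [h1, h2] at h
    exact h
  have hsum : ∑ i, (l i * γ + 2 - (2 / γ) * (l i)⁻¹)
      ≤ ∑ i, Real.sqrt ((l i) ^ 2 * γ ^ 2 + 4 * l i * γ) :=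
    Finset.sum_le_sum fun i _ => key i
  have hsplit : ∑ i, (l i * γ + 2 - (2 / γ) * (l i)⁻¹)
      = γ * (∑ i, l i) + 2 * d - (2 / γ) * (∑ i, (l i)⁻¹) := by
    rw [Finset.sum_sub_distrib, Finset.sum_add_distrib, ← Finset.sum_mul,
      ← Finset.mul_sum, Finset.sum_const, Finset.card_univ]
    push_cast [mul_comm, Fintype.card_fin]
    ring
  rw [hsplit] at hsum
  have hmid : (ρ * γ) ^ 2 ≤ ∑ i, (l i)⁻¹ := by
    have h2 : 2 * (ρ ^ 2) * γ ≤ (2 / γ) * (∑ i, (l i)⁻¹) := by nlinarith [hsum, heq]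
    have hγγ : (2 / γ) * γ = 2 := by field_simp
    nlinarith [mul_pos hγ hγ]
  have hnn : 0 ≤ ρ * γ := le_of_lt (mul_pos hρ hγ)
  rw [Real.le_sqrt hnn]
  · exact hmid
  · exact Finset.sum_nonneg fun i _ => inv_nonneg.2 (hl i).le
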